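/- Let m ≤ M and let v_{m_j}, v_{n_j} ∈ [m, M], and let N_0, N_1 be nonnegative integers with N_1 ≥ 1. Set A = v_{m_j} + v_{n_j} + N_1·M - (N_1 + 2)·m and suppose A > 0. Let U satisfy (N_0 + N_1 + 2)·m ≤ U and set V = N_1·M + N_0·m + v_{m_j} + v_{n_j}, with V > U. Then for any v ∈ [m, M], the rescaled value v - ((v - m)/A)·(V - U) lies in [m, M]. -/
import Mathlib


theorem stmt_7 (m M vm vn U : ℝ) (N0 N1 : ℕ) (hmM : m ≤ M)
    (hvm : vm ∈ Set.Icc m M) (hvn : vn ∈ Set.Icc m M) (hN1 : 1 ≤ N1)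
    (hA : 0 < vm + vn + (N1 : ℝ) * M - ((N1 : ℝ) + 2) * m)
    (hU : ((N0 : ℝ) + (N1 : ℝ) + 2) * m ≤ U)
    (hVU : U < (N1 : ℝ) * M + (N0 : ℝ) * m + vm + vn) :
    ∀ v ∈ Set.Icc m M,
      v - ((v - m) / (vm + vn + (N1 : ℝ) * M - ((N1 : ℝ) + 2) * m))
          * (((N1 : ℝ) * M + (N0 : ℝ) * m + vm + vn) - U) ∈ Set.Icc m M := by
  intro v hv
  obtain ⟨hv1, hv2⟩ := hv
  set A := vm + vn + (N1 : ℝ) * M - ((N1 : ℝ) + 2) * m with hAdef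
  set D := ((N1 : ℝ) * M + (N0 : ℝ) * m + vm + vn) - U with hDdef
  have hD : 0 < D := by simp [hDdef]; linarith
  have hDA : D ≤ A := by
    have : (0:ℝ) ≤ N0 := Nat.cast_nonneg _
    simp only [hDdef, hAdef]
    nlinarith [hU]
  have hfrac : 0 ≤ (v - m) / A := div_nonneg (by linarith) hA.le
  constructor
  · have : (v - m) / A * D ≤ v - m := by
      rw [div_mul_eq_mul_div, div_le_iff₀ hA]
      nlinarith
    linarith
  · have h0 : 0 ≤ (v - m) / A * D := mul_nonneg hfrac hD.le
    linarith
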